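/- Let G be a finite group and H ⊆ G a subgroup. Consider the action of G on the left coset space G/H. Assume that (i) for all distinct cosets ω, ω' ∈ G/H there exists g ∈ G whose action swaps ω and ω', and (ii) for all distinct ω, ω' ∈ G/H, every automorphism of the twofold point stabiliser (G_ω)_{ω'} is inner. Then any two subgroups U₁, U₂ ⊆ H that are conjugate in G are already conjugate in H. -/

import Mathlib

/-- Let G be a finite group and H ⊆ G a subgroup. Consider the action of G on
the left coset space G/H. Assume (i) for all distinct ω, ω' ∈ G/H there is g ∈ G swapping
ω and ω', and (ii) for all distinct ω, ω', every automorphism of the twofold point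
stabiliser G_ω ∩ G_{ω'} is inner. Then any two subgroups U₁, U₂ ⊆ H conjugate in G are
already conjugate in H. -/
theorem stmt0 {G : Type*} [Group G] [Finite G] (H : Subgroup G)
    (hswap : ∀ ω ω' : G ⧸ H, ω ≠ ω' → ∃ g : G, g • ω = ω' ∧ g • ω' = ω)
    (hinner : ∀ ω ω' : G ⧸ H, ω ≠ ω' →
      ∀ f : (MulAction.stabilizer G ω ⊓ MulAction.stabilizer G ω' : Subgroup G) ≃*
            (MulAction.stabilizer G ω ⊓ MulAction.stabilizer G ω' : Subgroup G),
        ∃ c : (MulAction.stabilizer G ω ⊓ MulAction.stabilizer G ω' : Subgroup G),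
          ∀ x, f x = c * x * c⁻¹)
    (U₁ U₂ : Subgroup G) (hU₁ : U₁ ≤ H) (hU₂ : U₂ ≤ H)
    (hconj : ∃ g : G, Subgroup.map (MulAut.conj g).toMonoidHom U₁ = U₂) :
    ∃ h ∈ H, Subgroup.map (MulAut.conj h).toMonoidHom U₁ = U₂ := by
  obtain ⟨g, hg⟩ := hconj
  by_cases hgH : g ∈ H
  · exact ⟨g, hgH, hg⟩
  set ω₀ : G ⧸ H := ((1 : G) : G ⧸ H) with hω₀
  set ω : G ⧸ H := g⁻¹ • ω₀ with hωdef
  have hstab0 : MulAction.stabilizer G ω₀ = H := MulAction.stabilizer_quotient H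
  have hne : ω₀ ≠ ω := by
    intro h
    apply hgH
    have : g⁻¹ ∈ H := by
      rw [← hstab0]; exact MulAction.mem_stabilizer_iff.mpr h.symm
    simpa using H.inv_mem this
  obtain ⟨s, hs1, hs2⟩ := hswap ω₀ ω hne
  set D := (MulAction.stabilizer G ω₀ ⊓ MulAction.stabilizer G ω : Subgroup G) with hD
  have hsinv0 : s⁻¹ • ω₀ = ω := by rw [← hs2, inv_smul_smul]
  have hsinvω : s⁻¹ • ω = ω₀ := by rw [← hs1, inv_smul_smul]
  have hmemD : ∀ x : G, x ∈ D ↔ x • ω₀ = ω₀ ∧ x • ω = ω := by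
    intro x
    simp [hD, Subgroup.mem_inf, MulAction.mem_stabilizer_iff]
  have hconjD : ∀ x ∈ D, s * x * s⁻¹ ∈ D := by
    intro x hx
    rw [hmemD] at hx ⊢
    constructor
    · rw [mul_smul, mul_smul, hsinv0, hx.2, hs2]
    · rw [mul_smul, mul_smul, hsinvω, hx.1, hs1]
  have hconjD' : ∀ x ∈ D, s⁻¹ * x * s ∈ D := by
    intro x hx
    rw [hmemD] at hx ⊢
    constructor
    · rw [mul_smul, mul_smul, hs1, hx.2, hsinvω]
    · rw [mul_smul, mul_smul, hs2, hx.1, hsinv0]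
  have hmap : Subgroup.map ((MulAut.conj s : G ≃* G) : G →* G) D = D := by
    ext x
    simp only [Subgroup.mem_map]
    constructor
    · rintro ⟨y, hy, rfl⟩
      simpa [MulAut.conj, mul_assoc] using hconjD y hy
    · intro hx
      refine ⟨s⁻¹ * x * s, hconjD' x hx, ?_⟩
      simp [MulAut.conj]
      group
  let f : D ≃* D :=
    ((MulAut.conj s : G ≃* G).subgroupMap D).trans (MulEquiv.subgroupCongr hmap)
  obtain ⟨c, hc⟩ := hinner ω₀ ω hne f
  have hcD : (c : G) ∈ D := c.2
  have hcval : ∀ x : G, x ∈ D → s * x * s⁻¹ = (c : G) * x * (c : G)⁻¹ := by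
    intro x hx
    have := hc ⟨x, hx⟩
    have h2 : ((f ⟨x, hx⟩ : D) : G) = ((c * ⟨x, hx⟩ * c⁻¹ : D) : G) := by rw [this]
    rw [show ((f ⟨x, hx⟩ : D) : G) = s * x * s⁻¹ from rfl] at h2
    simpa [f, MulEquiv.coe_subgroupMap_apply, MulAut.conj, mul_assoc] using h2
  -- U₁ ≤ D
  have hU₁D : U₁ ≤ D := by
    intro u hu
    rw [hmemD]
    constructor
    · rw [← hstab0] at hU₁
      exact MulAction.mem_stabilizer_iff.mp (hU₁ hu)
    · have hgu : g * u * g⁻¹ ∈ H := by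
        apply hU₂
        rw [← hg]
        exact ⟨u, hu, by simp [MulAut.conj, mul_assoc]⟩
      have : (g * u * g⁻¹) • ω₀ = ω₀ := by
        rw [← hstab0] at hgu
        exact MulAction.mem_stabilizer_iff.mp hgu
      rw [hωdef]
      calc u • g⁻¹ • ω₀ = g⁻¹ • (g * u * g⁻¹) • ω₀ := by
            simp [mul_smul]
        _ = g⁻¹ • ω₀ := by rw [this]
  -- the element h
  refine ⟨g * s⁻¹ * c, ?_, ?_⟩
  · apply hstab0.le
    refine MulAction.mem_stabilizer_iff.mpr ?_
    have hc0 : (c : G) • ω₀ = ω₀ := ((hmemD _).mp hcD).1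
    have hgω : g • ω = ω₀ := by rw [hωdef, smul_inv_smul]
    rw [mul_smul, mul_smul, hc0, hsinv0, hgω]
  · rw [← hg]
    ext x
    simp only [Subgroup.mem_map]
    constructor
    · rintro ⟨u, hu, rfl⟩
      refine ⟨u, hu, ?_⟩
      have key := hcval u (hU₁D hu)
      simp only [MulEquiv.toMonoidHom_eq_coe, MonoidHom.coe_coe, MulAut.conj_apply]
      have : g * s⁻¹ * (c:G) * u * (g * s⁻¹ * (c:G))⁻¹
          = g * (s⁻¹ * ((c:G) * u * (c:G)⁻¹) * s) * g⁻¹ := by group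
      rw [this, ← key]
      group
    · rintro ⟨u, hu, rfl⟩
      refine ⟨u, hu, ?_⟩
      have key := hcval u (hU₁D hu)
      simp only [MulEquiv.toMonoidHom_eq_coe, MonoidHom.coe_coe, MulAut.conj_apply]
      have : g * s⁻¹ * (c:G) * u * (g * s⁻¹ * (c:G))⁻¹
          = g * (s⁻¹ * ((c:G) * u * (c:G)⁻¹) * s) * g⁻¹ := by group
      rw [this, ← key]
      group
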